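/- Let p > 1 and γ ∈ ℝ, and let Γ : ℝ → ℝ be a function of class C¹ such that Γ(s)/|s|^p → γ as |s| → ∞ and pΓ(s) − sΓ'(s) → +∞ as |s| → ∞. Then Γ(s) − γ|s|^p → +∞ as |s| → ∞. -/

import Mathlib

open Filter Topology

private lemma key_atTop (p γ : ℝ) (hp : 1 < p) (Γ : ℝ → ℝ) (hΓ : ContDiff ℝ 1 Γ)
    (h1 : Tendsto (fun s => Γ s / |s| ^ p) atTop (𝓝 γ))
    (h2 : Tendsto (fun s => p * Γ s - s * deriv Γ s) atTop atTop) :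
    Tendsto (fun s => Γ s - γ * |s| ^ p) atTop atTop := by
  have hp0 : 0 < p := lt_trans one_pos hp
  rw [tendsto_atTop]
  intro C
  obtain ⟨s0, hs0⟩ := eventually_atTop.mp
    ((h2.eventually_ge_atTop (p * C)).and (eventually_ge_atTop 1))
  have hs01 : 1 ≤ s0 := (hs0 s0 le_rfl).2
  set D : ℝ → ℝ := fun s => Γ s * s ^ (-p) - γ - C * s ^ (-p) with hD
  have hdiff : ∀ x : ℝ, 0 < x →
      HasDerivAt D (deriv Γ x * x ^ (-p) + Γ x * (-p * x ^ (-p - 1))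
        - C * (-p * x ^ (-p - 1))) x := by
    intro x hx
    have hΓ' : HasDerivAt Γ (deriv Γ x) x :=
      ((hΓ.differentiable one_ne_zero) x).hasDerivAt
    have hr : HasDerivAt (fun s : ℝ => s ^ (-p)) (-p * x ^ (-p - 1)) x :=
      Real.hasDerivAt_rpow_const (Or.inl hx.ne')
    exact ((hΓ'.mul hr).sub_const γ).sub (hr.const_mul C)
  -- D is antitone on [s0, ∞)
  have hanti : AntitoneOn D (Set.Ici s0) := by
    apply antitoneOn_of_deriv_nonpos (convex_Ici s0)
    · intro x hx
      have hx0 : 0 < x := lt_of_lt_of_le one_pos (le_trans hs01 hx)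
      exact (hdiff x hx0).continuousAt.continuousWithinAt
    · intro x hx
      rw [interior_Ici] at hx
      have hx0 : 0 < x := lt_of_lt_of_le one_pos (le_trans hs01 (le_of_lt hx))
      exact (hdiff x hx0).differentiableAt.differentiableWithinAt
    · intro x hx
      rw [interior_Ici] at hx
      have hxs0 : s0 ≤ x := le_of_lt hx
      have hx0 : 0 < x := lt_of_lt_of_le one_pos (le_trans hs01 hxs0)
      rw [(hdiff x hx0).deriv]
      have hF : p * C ≤ p * Γ x - x * deriv Γ x := (hs0 x hxs0).1
      have hsplit : x ^ (-p) = x ^ (-p - 1) * x := by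
        rw [← Real.rpow_add_one hx0.ne' (-p - 1)]; ring_nf
      have hpos : (0 : ℝ) < x ^ (-p - 1) := Real.rpow_pos_of_pos hx0 _
      rw [hsplit]
      nlinarith [hpos, hF]
  -- D tends to 0 at atTop
  have hDlim : Tendsto D atTop (𝓝 0) := by
    have ha : Tendsto (fun s : ℝ => Γ s * s ^ (-p)) atTop (𝓝 γ) := by
      apply h1.congr'
      filter_upwards [eventually_ge_atTop (1 : ℝ)] with s hs
      have hs0' : 0 < s := lt_of_lt_of_le one_pos hs
      rw [abs_of_pos hs0', Real.rpow_neg hs0'.le, div_eq_mul_inv]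
    have hb : Tendsto (fun s : ℝ => C * s ^ (-p)) atTop (𝓝 (C * 0)) :=
      (tendsto_rpow_neg_atTop hp0).const_mul C
    have := (ha.sub_const γ).sub hb
    simpa using this
  -- D ≥ 0 on [s0, ∞)
  have hDnonneg : ∀ s, s0 ≤ s → 0 ≤ D s := by
    intro s hs
    refine le_of_tendsto hDlim ?_
    filter_upwards [eventually_ge_atTop s] with t ht
    exact hanti (Set.mem_Ici.mpr hs) (Set.mem_Ici.mpr (le_trans hs ht)) ht
  -- conclude
  filter_upwards [eventually_ge_atTop s0] with s hs
  have hs1 : 1 ≤ s := le_trans hs01 hs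
  have hspos : 0 < s := lt_of_lt_of_le one_pos hs1
  have hD0 : 0 ≤ D s := hDnonneg s hs
  have hmul : s ^ (-p) * s ^ p = 1 := by
    rw [← Real.rpow_add hspos]; simp
  have habs : |s| = s := abs_of_pos hspos
  have hppos : (0 : ℝ) < s ^ p := Real.rpow_pos_of_pos hspos p
  rw [habs]
  -- from 0 ≤ Γ s * s^(-p) - γ - C * s^(-p), multiply by s^p
  have h := mul_le_mul_of_nonneg_right hD0 hppos.le
  simp only [hD] at h
  have hexp : (Γ s * s ^ (-p) - γ - C * s ^ (-p)) * s ^ p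
      = Γ s * (s ^ (-p) * s ^ p) - γ * s ^ p - C * (s ^ (-p) * s ^ p) := by ring
  rw [hexp, hmul] at h
  linarith

theorem stmt_3 (p γ : ℝ) (hp : 1 < p) (Γ : ℝ → ℝ) (hΓ : ContDiff ℝ 1 Γ)
    (h1 : Tendsto (fun s => Γ s / |s| ^ p) atTop (𝓝 γ))
    (h1' : Tendsto (fun s => Γ s / |s| ^ p) atBot (𝓝 γ))
    (h2 : Tendsto (fun s => p * Γ s - s * deriv Γ s) atTop atTop)
    (h2' : Tendsto (fun s => p * Γ s - s * deriv Γ s) atBot atTop) :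
    Tendsto (fun s => Γ s - γ * |s| ^ p) atTop atTop ∧
      Tendsto (fun s => Γ s - γ * |s| ^ p) atBot atTop := by
  constructor
  · exact key_atTop p γ hp Γ hΓ h1 h2
  · -- apply the atTop lemma to Γ ∘ neg
    set Γ₂ : ℝ → ℝ := fun s => Γ (-s) with hΓ₂def
    have hΓ₂ : ContDiff ℝ 1 Γ₂ := hΓ.comp (contDiff_neg)
    have hderiv : ∀ s, deriv Γ₂ s = -deriv Γ (-s) := by
      intro s
      have h := ((hΓ.differentiable one_ne_zero) (-s)).hasDerivAt
      have := h.comp s (hasDerivAt_neg s)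
      simpa [hΓ₂def, mul_comm, Function.comp_def] using this.deriv
    have h1₂ : Tendsto (fun s => Γ₂ s / |s| ^ p) atTop (𝓝 γ) := by
      have := h1'.comp tendsto_neg_atTop_atBot
      simpa [Function.comp_def, abs_neg] using this
    have h2₂ : Tendsto (fun s => p * Γ₂ s - s * deriv Γ₂ s) atTop atTop := by
      have := h2'.comp tendsto_neg_atTop_atBot
      apply this.congr
      intro s
      simp only [Function.comp_def, hderiv]
      ring
    have hkey := key_atTop p γ hp Γ₂ hΓ₂ h1₂ h2₂
    have := hkey.comp tendsto_neg_atBot_atTop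
    simpa [Function.comp_def, abs_neg, hΓ₂def] using this
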